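/- arXiv:1609.07589 — 2 statements merged into one kernel-verified Lean document; each statement's English description precedes it below -/
import Mathlib

section
/- Let K and N be natural numbers with 1 ≤ K ≤ N. Then C(N,K) · (K/N)^K · (1 − K/N)^{N−K} ≥ K^{−K} e^{−K}, where all powers are natural-number powers of real numbers (with the convention 0^0 = 1 when K = N). -/
/-- For naturals `1 ≤ K ≤ N`,
`C(N,K) (K/N)^K (1 - K/N)^(N-K) ≥ K^(-K) e^(-K)`. -/
theorem choose_mul_pow_ge (K N : ℕ) (hK : 1 ≤ K) (hKN : K ≤ N) :
    (N.choose K : ℝ) * ((K : ℝ) / N) ^ K * (1 - (K : ℝ) / N) ^ (N - K) ≥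
      ((K : ℝ) ^ K)⁻¹ * Real.exp (-(K : ℝ)) := by
  have hKpos : (0:ℝ) < K := by exact_mod_cast hK
  have hNpos : (0:ℝ) < N := lt_of_lt_of_le hKpos (by exact_mod_cast hKN)
  have hxnn : (0:ℝ) ≤ 1 - (K:ℝ)/N := by
    rw [sub_nonneg, div_le_one hNpos]; exact_mod_cast hKN
  -- first part: choose * (K/N)^K ≥ (K^K)⁻¹
  have h1 : (N.choose K : ℝ) * ((K : ℝ) / N) ^ K ≥ ((K : ℝ) ^ K)⁻¹ := by
    have hfact : ((N + 1 - K : ℕ) ^ K : ℝ) / ((Nat.factorial K) : ℝ) ≤ N.choose K :=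
      Nat.pow_le_choose K N
    have hfK : (((Nat.factorial K) : ℕ) : ℝ) ≤ (K:ℝ)^K := by exact_mod_cast Nat.factorial_le_pow K
    have hfpos : (0:ℝ) < ((Nat.factorial K) : ℝ) := by exact_mod_cast K.factorial_pos
    have hstep : ((N + 1 - K : ℕ) ^ K : ℝ) / (K:ℝ)^K ≤ N.choose K :=
      le_trans (by
        apply div_le_div_of_nonneg_left _ hfpos hfK
        positivity) hfact
    -- (N+1-K) * K ≥ N
    have hNK : (N:ℝ) ≤ ((N + 1 - K : ℕ) : ℝ) * K := by
      have : N ≤ (N + 1 - K) * K := by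
        rcases Nat.exists_eq_add_of_le hKN with ⟨m, rfl⟩
        have : K + m + 1 - K = m + 1 := by omega
        rw [this]
        calc K + m ≤ K + m * K := by nlinarith [Nat.one_le_iff_ne_zero.mp hK]
          _ = (m + 1) * K := by ring
      exact_mod_cast this
    have hKKpos : (0:ℝ) < (K:ℝ)^K := by positivity
    have hNKpow : ((N:ℝ)/(K:ℝ))^K ≤ ((N + 1 - K : ℕ) : ℝ)^K := by
      apply pow_le_pow_left₀ (by positivity)
      rw [div_le_iff₀ hKpos]; exact hNK
    calc ((K : ℝ) ^ K)⁻¹ = ((N:ℝ)/(K:ℝ))^K / (K:ℝ)^K * ((K:ℝ)/N)^K := by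
          rw [div_pow, div_pow]
          field_simp
      _ ≤ ((N + 1 - K : ℕ) : ℝ)^K / (K:ℝ)^K * ((K:ℝ)/N)^K := by
          apply mul_le_mul_of_nonneg_right _ (by positivity)
          gcongr
      _ ≤ (N.choose K : ℝ) * ((K : ℝ) / N) ^ K := by
          apply mul_le_mul_of_nonneg_right _ (by positivity)
          push_cast at hstep
          exact hstep
  -- second part: (1 - K/N)^(N-K) ≥ exp(-K)
  have h2 : (1 - (K : ℝ) / N) ^ (N - K) ≥ Real.exp (-(K : ℝ)) := by
    rcases eq_or_lt_of_le hKN with h | h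
    · subst h
      simp only [Nat.sub_self, pow_zero, ge_iff_le]
      exact Real.exp_le_one_iff.mpr (neg_nonpos.mpr hKpos.le)
    · have hM : (0:ℝ) < ((N - K : ℕ) : ℝ) := by
        have : 0 < N - K := by omega
        exact_mod_cast this
      have hMcast : ((N - K : ℕ) : ℝ) = (N:ℝ) - K := by
        push_cast [Nat.cast_sub hKN]; ring
      have hx' : (0:ℝ) < 1 - (K:ℝ)/N := by
        rw [sub_pos, div_lt_one hNpos]; exact_mod_cast h
      have key : Real.exp (-(K:ℝ) / ((N - K : ℕ):ℝ)) ≤ 1 - (K:ℝ)/N := by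
        rw [neg_div, Real.exp_neg, inv_le_comm₀ (Real.exp_pos _) hx']
        have hne' : (N:ℝ) - K ≠ 0 := by rw [← hMcast]; exact ne_of_gt hM
        have hinv : (1 - (K:ℝ)/N)⁻¹ = (K:ℝ)/((N - K : ℕ):ℝ) + 1 := by
          rw [hMcast, div_add_one hne', inv_eq_one_div]
          rw [div_eq_div_iff hx'.ne' hne']
          field_simp
          ring
        rw [hinv]
        exact Real.add_one_le_exp _
      have := pow_le_pow_left₀ (Real.exp_nonneg _) key (N - K)
      rw [← Real.exp_nat_mul] at this
      have hne : ((N - K : ℕ):ℝ) ≠ 0 := ne_of_gt hM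
      have heq : ((N - K : ℕ):ℝ) * (-(K:ℝ) / ((N - K : ℕ):ℝ)) = -(K:ℝ) := by
        rw [mul_comm, div_mul_cancel₀ _ hne]
      rw [heq] at this
      exact this
  calc ((K : ℝ) ^ K)⁻¹ * Real.exp (-(K : ℝ))
      ≤ ((N.choose K : ℝ) * ((K : ℝ) / N) ^ K) * (1 - (K : ℝ) / N) ^ (N - K) :=
        mul_le_mul h1 h2 (Real.exp_nonneg _) (le_trans (by positivity) h1)
    _ = _ := by ring
end

section
/- Let K and N be natural numbers with 1 ≤ K ≤ N, let (Ω, 𝒜, μ) be a probability space, and let X₁, …, X_N : Ω → ℝ be mutually independent random variables, each distributed according to the Gamma distribution with shape 3K−2 and rate 1/2 (chi-square with 2(3K−2) degrees of freedom), whose CDF is F(ℓ) = γ(3K−2, ℓ/2)/Γ(3K−2). Define the K-th smallest value L(ω) = inf{ t ∈ ℝ : at least K indices i satisfy X_i(ω) ≤ t }. If K/N ≤ F(2), then the (lower Lebesgue) integral ∫ (1/L) dμ ≥ K^{−K} e^{−K} (C₂ N / K)^{1/(3K−2)}, where C₂ = e^{−1} 2^{−(3K−2)}/Γ(3K−1).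 In particular, 𝔼[1/L_{Kth-min}] = Ω(N^{1/(3K−2)}). -/
open MeasureTheory ProbabilityTheory Finset
open scoped ENNReal NNReal

lemma prob_core {Ω : Type*} [MeasurableSpace Ω] (μ : Measure Ω) [IsProbabilityMeasure μ]
    (K N m : ℕ) (hK : 1 ≤ K) (hKm : m * K ≤ N)
    (X : Fin N → Ω → ℝ) (hmeas : ∀ i, Measurable (X i))
    (hindep : iIndepFun X μ)
    (ν : Measure ℝ) (hdist : ∀ i, μ.map (X i) = ν) (t₀ : ℝ) :
    (∑ u ∈ (Finset.univ.powerset.erase (∅ : Finset (Fin m))),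
        ν (Set.Iic t₀) ^ u.card * ν (Set.Ioi t₀) ^ (m - u.card)) ^ K ≤
      μ {ω | K ≤ (Finset.univ.filter fun i => X i ω ≤ t₀).card} := by
  classical
  set p := ν (Set.Iic t₀) with hp
  set q := ν (Set.Ioi t₀) with hq
  let emb : Fin K × Fin m → Fin N := fun kj => Fin.castLE hKm (finProdFinEquiv (kj.2, kj.1))
  have hemb : Function.Injective emb := by
    intro x y h
    have h2 : finProdFinEquiv (x.2, x.1) = finProdFinEquiv (y.2, y.1) :=
      Fin.castLE_injective hKm h
    have h3 := finProdFinEquiv.injective h2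
    exact Prod.ext (congrArg Prod.snd h3) (congrArg Prod.fst h3)
  let Bs : (Fin K → Finset (Fin m)) → (Fin K × Fin m) → Set ℝ := fun s kj =>
    if kj.2 ∈ s kj.1 then Set.Iic t₀ else Set.Ioi t₀
  have hBsmeas : ∀ s kj, MeasurableSet (Bs s kj) := by
    intro s kj
    by_cases h : kj.2 ∈ s kj.1 <;> simp only [Bs, h, if_true, if_false] <;>
      [exact measurableSet_Iic; exact measurableSet_Ioi]
  let E : (Fin K → Finset (Fin m)) → Set Ω := fun s => ⋂ kj : Fin K × Fin m, X (emb kj) ⁻¹' Bs s kj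
  have hE_meas : ∀ s, MeasurableSet (E s) :=
    fun s => MeasurableSet.iInter fun kj => (hmeas _) (hBsmeas s kj)
  have hXB : ∀ (i : Fin N) (B : Set ℝ), MeasurableSet B → μ (X i ⁻¹' B) = ν B := by
    intro i B hB
    rw [← hdist i, Measure.map_apply (hmeas i) hB]
  -- measure of E s
  have hμE : ∀ s, μ (E s) = ∏ kj : Fin K × Fin m, ν (Bs s kj) := by
    intro s
    let B' : Fin N → Set ℝ := fun i => if h : ∃ kj, emb kj = i then Bs s h.choose else Set.univ
    have hB' : ∀ kj, B' (emb kj) = Bs s kj := by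
      intro kj
      have hex : ∃ kj', emb kj' = emb kj := ⟨kj, rfl⟩
      simp only [B', dif_pos hex]
      rw [hemb hex.choose_spec]
    have hB'meas : ∀ i, MeasurableSet (B' i) := by
      intro i
      by_cases h : ∃ kj, emb kj = i
      · simp only [B', dif_pos h]; exact hBsmeas s _
      · simp only [B', dif_neg h]; exact MeasurableSet.univ
    have hset : (⋂ i ∈ Finset.univ.image emb, X i ⁻¹' B' i) = E s := by
      ext ω
      simp only [Set.mem_iInter, Finset.mem_image, Finset.mem_univ, true_and, E, Set.mem_preimage]
      constructor
      · intro h kj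
        have := h (emb kj) ⟨kj, rfl⟩
        rwa [hB'] at this
      · rintro h i ⟨kj, rfl⟩
        rw [hB']; exact h kj
    have := hindep.measure_inter_preimage_eq_mul (Finset.univ.image emb) (sets := B')
      (fun i _ => hB'meas i)
    rw [hset] at this
    rw [this, Finset.prod_image (fun x _ y _ h => hemb h)]
    exact Finset.prod_congr rfl fun kj _ => by rw [hB', hXB _ _ (hBsmeas s kj)]
  -- product over pairs
  have hprod : ∀ s, (∏ kj : Fin K × Fin m, ν (Bs s kj)) =
      ∏ k : Fin K, (p ^ (s k).card * q ^ (m - (s k).card)) := by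
    intro s
    rw [Fintype.prod_prod_type]
    refine Finset.prod_congr rfl fun k _ => ?_
    have : ∀ j : Fin m, ν (Bs s (k, j)) = if j ∈ s k then p else q := by
      intro j; simp only [Bs]; split <;> rfl
    simp_rw [this]
    rw [Finset.prod_ite, Finset.prod_const, Finset.prod_const]
    congr 1
    · congr 1
      simp [Finset.filter_mem_eq_inter]
    · congr 1
      have hcompl : (filter (fun x => x ∉ s k) univ) = (s k)ᶜ := by ext j; simp
      rw [hcompl, Finset.card_compl, Fintype.card_fin]
  let P : Finset (Finset (Fin m)) := Finset.univ.powerset.erase ∅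
  let S : Finset (Fin K → Finset (Fin m)) := Fintype.piFinset fun _ => P
  have hdisj : (↑S : Set (Fin K → Finset (Fin m))).PairwiseDisjoint E := by
    intro s _ s' _ hne
    rw [Function.onFun, Set.disjoint_left]
    intro ω h1 h2
    obtain ⟨k, hk⟩ := Function.ne_iff.1 hne
    have hnotall : ¬ ∀ j, j ∈ s k ↔ j ∈ s' k := fun h => hk (Finset.ext h)
    push_neg at hnotall
    obtain ⟨j, hj⟩ := hnotall
    have h1' := Set.mem_iInter.1 h1 (k, j)
    have h2' := Set.mem_iInter.1 h2 (k, j)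
    simp only [Bs, Set.mem_preimage] at h1' h2'
    by_cases hm1 : j ∈ s k <;> by_cases hm2 : j ∈ s' k
    · tauto
    · rw [if_pos hm1] at h1'; rw [if_neg hm2] at h2'
      exact absurd (Set.mem_Iic.1 h1') (not_le.2 (Set.mem_Ioi.1 h2'))
    · rw [if_neg hm1] at h1'; rw [if_pos hm2] at h2'
      exact absurd (Set.mem_Iic.1 h2') (not_le.2 (Set.mem_Ioi.1 h1'))
    · tauto
  have hsub : ∀ s ∈ S, E s ⊆ {ω | K ≤ (Finset.univ.filter fun i => X i ω ≤ t₀).card} := by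
    intro s hs ω hω
    have hne : ∀ k, (s k).Nonempty := by
      intro k
      have hmem := Fintype.mem_piFinset.1 hs k
      simp only [P, Finset.mem_erase] at hmem
      exact Finset.nonempty_iff_ne_empty.2 hmem.1
    choose j hj using hne
    have hXle : ∀ k, X (emb (k, j k)) ω ≤ t₀ := by
      intro k
      have hm := Set.mem_iInter.1 hω (k, j k)
      simp only [Bs, Set.mem_preimage, if_pos (hj k)] at hm
      exact hm
    simp only [Set.mem_setOf_eq]
    have hcard : K = (Finset.univ : Finset (Fin K)).card := by
      rw [Finset.card_univ, Fintype.card_fin]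
    rw [hcard]
    apply Finset.card_le_card_of_injOn (fun k => emb (k, j k))
    · intro k _
      simp only [Finset.mem_filter, Finset.mem_univ, true_and]
      exact Finset.mem_coe.2 (Finset.mem_filter.2 ⟨Finset.mem_univ _, hXle k⟩)
    · intro k1 _ k2 _ h
      exact congrArg Prod.fst (hemb h)
  calc (∑ u ∈ Finset.univ.powerset.erase (∅ : Finset (Fin m)),
        p ^ u.card * q ^ (m - u.card)) ^ K
      = ∏ _k : Fin K, (∑ u ∈ P, p ^ u.card * q ^ (m - u.card)) := by
        rw [Finset.prod_const, Finset.card_univ, Fintype.card_fin]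
    _ = ∑ s ∈ S, ∏ k : Fin K, (p ^ (s k).card * q ^ (m - (s k).card)) :=
        Finset.prod_univ_sum _ _
    _ = ∑ s ∈ S, μ (E s) := by
        refine Finset.sum_congr rfl fun s _ => ?_
        rw [hμE, hprod]
    _ = μ (⋃ s ∈ S, E s) := (measure_biUnion_finset hdisj (fun s _ => hE_meas s)).symm
    _ ≤ μ {ω | K ≤ (Finset.univ.filter fun i => X i ω ≤ t₀).card} :=
        measure_mono (Set.iUnion₂_subset hsub)

noncomputable def lowerGamma (a x : ℝ) : ℝ :=
  ∫ t in (0:ℝ)..x, t ^ (a - 1) * Real.exp (-t)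

lemma gamma_lower (a t : ℝ) (ht : 0 < t) (g : ℝ → ℝ)
    (hg : ContinuousOn g (Set.Icc 0 t))
    (hg0 : ∀ x ∈ Set.Ioc 0 t, 0 ≤ g x)
    (hle : ∀ x ∈ Set.Ioc 0 t, g x ≤ gammaPDFReal a (1/2) x) :
    ENNReal.ofReal (∫ x in Set.Ioc 0 t, g x) ≤ gammaMeasure a (1/2) (Set.Iic t) := by
  have hint : IntegrableOn g (Set.Ioc 0 t) :=
    (hg.integrableOn_Icc).mono_set Set.Ioc_subset_Icc_self
  rw [ofReal_integral_eq_lintegral_ofReal hint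
    ((ae_restrict_iff' measurableSet_Ioc).2 (ae_of_all _ hg0))]
  calc ∫⁻ x in Set.Ioc 0 t, ENNReal.ofReal (g x)
      ≤ ∫⁻ x in Set.Ioc 0 t, gammaPDF a (1/2) x := by
        refine setLIntegral_mono ((measurable_gammaPDFReal a (1/2)).ennreal_ofReal) ?_
        exact fun x hx => ENNReal.ofReal_le_ofReal (hle x hx)
    _ ≤ ∫⁻ x in Set.Iic t, gammaPDF a (1/2) x := lintegral_mono_set Set.Ioc_subset_Iic_self
    _ = gammaMeasure a (1/2) (Set.Iic t) := by
        rw [gammaMeasure, withDensity_apply _ measurableSet_Iic]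

lemma case_A (a t : ℝ) (ha : 1 ≤ a) (ht : 0 < t) (ht2 : t ≤ 2) :
    ENNReal.ofReal (Real.exp (-1) * ((2:ℝ) ^ a)⁻¹ / Real.Gamma (a + 1) * t ^ a) ≤
      gammaMeasure a (1/2) (Set.Iic t) := by
  have ha0 : 0 < a := by linarith
  have hΓ : 0 < Real.Gamma a := Real.Gamma_pos_of_pos ha0
  set C := Real.exp (-1) * ((1/2:ℝ) ^ a) / Real.Gamma a with hC
  have hCpos : 0 ≤ C := by
    apply div_nonneg (mul_nonneg (Real.exp_nonneg _) (Real.rpow_nonneg (by norm_num) _)) hΓ.le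
  have key := gamma_lower a t ht (fun x => C * x ^ (a - 1)) ?_ ?_ ?_
  · refine le_trans (le_of_eq ?_) key
    congr 1
    rw [← intervalIntegral.integral_of_le ht.le, intervalIntegral.integral_const_mul,
      integral_rpow (Or.inl (by linarith))]
    rw [Real.zero_rpow (by linarith), sub_zero]
    have h1 : a - 1 + 1 = a := by ring
    rw [h1, hC]
    rw [Real.Gamma_add_one (ne_of_gt ha0)]
    have h2 : ((1/2:ℝ) ^ a) = ((2:ℝ) ^ a)⁻¹ := by
      rw [one_div, Real.inv_rpow (by norm_num)]
    rw [h2]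
    field_simp
  · exact (continuousOn_const.mul (continuousOn_id.rpow_const
      (fun x _ => Or.inr (by linarith))))
  · exact fun x hx => mul_nonneg hCpos (Real.rpow_nonneg hx.1.le _)
  · intro x hx
    rw [gammaPDFReal, if_pos hx.1.le]
    have hexp : Real.exp (-1) ≤ Real.exp (-(1/2 * x)) :=
      Real.exp_le_exp.2 (by nlinarith [hx.2, ht2])
    have hxa : 0 ≤ x ^ (a - 1) := Real.rpow_nonneg hx.1.le _
    have hhalf : (0:ℝ) ≤ (1/2:ℝ) ^ a := Real.rpow_nonneg (by norm_num) _
    calc C * x ^ (a-1) = ((1/2:ℝ) ^ a / Real.Gamma a * x ^ (a-1)) * Real.exp (-1) := by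
          rw [hC]; ring
      _ ≤ ((1/2:ℝ) ^ a / Real.Gamma a * x ^ (a-1)) * Real.exp (-(1/2 * x)) := by
          apply mul_le_mul_of_nonneg_left hexp
          exact mul_nonneg (div_nonneg hhalf hΓ.le) hxa
      _ = (1/2:ℝ) ^ a / Real.Gamma a * x ^ (a-1) * Real.exp (-(1/2 * x)) := by ring

lemma case_B (a : ℝ) (ha : 1 ≤ a) :
    ENNReal.ofReal (lowerGamma a 1 / Real.Gamma a) ≤ gammaMeasure a (1/2) (Set.Iic 2) := by
  have ha0 : 0 < a := by linarith
  have hΓ : 0 < Real.Gamma a := Real.Gamma_pos_of_pos ha0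
  have key := gamma_lower a 2 (by norm_num)
    (fun x => (1/2:ℝ) ^ a / Real.Gamma a * x ^ (a-1) * Real.exp (-(1/2 * x))) ?_ ?_ ?_
  · refine le_trans (le_of_eq ?_) key
    congr 1
    rw [← intervalIntegral.integral_of_le (by norm_num : (0:ℝ) ≤ 2)]
    have hsub : ∫ x in (0:ℝ)..2, (1/2:ℝ) ^ a / Real.Gamma a * x ^ (a-1) * Real.exp (-(1/2 * x))
        = (1/2:ℝ) ^ a / Real.Gamma a * ∫ x in (0:ℝ)..2, x ^ (a-1) * Real.exp (-(1/2 * x)) := by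
      rw [← intervalIntegral.integral_const_mul]
      congr 1; ext x; ring
    rw [hsub]
    have hcomp := intervalIntegral.integral_comp_mul_left (a := (0:ℝ)) (b := (1:ℝ))
      (fun x => x ^ (a-1) * Real.exp (-(1/2 * x))) (c := (2:ℝ)) (by norm_num)
    simp only [mul_zero, mul_one] at hcomp
    have hcong : ∫ x in (0:ℝ)..1, (fun x => x ^ (a-1) * Real.exp (-(1/2 * x))) (2 * x)
        = ∫ x in (0:ℝ)..1, (2:ℝ) ^ (a-1) * (x ^ (a-1) * Real.exp (-x)) := by
      apply intervalIntegral.integral_congr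
      intro x hx
      rw [Set.uIcc_of_le (by norm_num : (0:ℝ) ≤ 1)] at hx
      simp only
      rw [Real.mul_rpow (by norm_num) hx.1]
      ring_nf
    rw [hcong, intervalIntegral.integral_const_mul] at hcomp
    -- hcomp : 2⁻¹ • ∫ = 2^(a-1) * lowerGamma a 1  form; rearrange
    have h2 : ∫ x in (0:ℝ)..2, x ^ (a-1) * Real.exp (-(1/2 * x))
        = 2 * ((2:ℝ) ^ (a-1) * lowerGamma a 1) := by
      rw [smul_eq_mul] at hcomp
      rw [lowerGamma]
      linarith
    rw [h2]
    have h3 : (1/2:ℝ) ^ a * (2 * (2:ℝ) ^ (a-1)) = 1 := by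
      rw [one_div, Real.inv_rpow (by norm_num), Real.rpow_sub (by norm_num), Real.rpow_one]
      have : (0:ℝ) < 2 ^ a := Real.rpow_pos_of_pos (by norm_num) a
      field_simp
    have h4 : (1/2:ℝ) ^ a / Real.Gamma a * (2 * ((2:ℝ) ^ (a-1) * lowerGamma a 1))
        = ((1/2:ℝ) ^ a * (2 * (2:ℝ) ^ (a-1))) * lowerGamma a 1 / Real.Gamma a := by ring
    rw [h4, h3, one_mul]
  · apply ContinuousOn.mul
    · exact continuousOn_const.mul (continuousOn_id.rpow_const (fun x _ => Or.inr (by linarith)))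
    · exact (Real.continuous_exp.comp (continuous_const.mul continuous_id).neg).continuousOn
  · intro x hx
    apply mul_nonneg (mul_nonneg (div_nonneg (Real.rpow_nonneg (by norm_num) _) hΓ.le)
      (Real.rpow_nonneg hx.1.le _)) (Real.exp_nonneg _)
  · intro x hx
    rw [gammaPDFReal, if_pos hx.1.le]

set_option maxHeartbeats 2000000 in
/-- Theorem 2 of the paper: let `X₁, …, X_N` be mutually independent, each
chi-square with `2(3K-2)` degrees of freedom (i.e. Gamma with shape `3K-2` and
rate `1/2`), and let `L(ω)` be the `K`-th smallest value among the `X_i(ω)`.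
If `K/N ≤ F(2)`, where `F(ℓ) = γ(3K-2, ℓ/2)/Γ(3K-2)` is the common CDF, then
`𝔼[1/L] ≥ K^(-K) e^(-K) (C₂ N / K)^(1/(3K-2))` with
`C₂ = e⁻¹ 2^(-(3K-2))/Γ(3K-1)`; in particular
`𝔼[1/L_{Kth-min}] = Ω(N^(1/(3K-2)))`. -/
theorem TIL_decay_rate (Ω : Type*) [MeasurableSpace Ω]
    (μ : Measure Ω) [IsProbabilityMeasure μ]
    (K N : ℕ) (hK : 1 ≤ K) (hKN : K ≤ N)
    (X : Fin N → Ω → ℝ) (hmeas : ∀ i, Measurable (X i))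
    (hindep : iIndepFun X μ)
    (hdist : ∀ i, μ.map (X i) = gammaMeasure (3 * (K : ℝ) - 2) (1 / 2))
    (hF : (K : ℝ) / N ≤
      lowerGamma (3 * (K : ℝ) - 2) (2 / 2) / Real.Gamma (3 * (K : ℝ) - 2)) :
    ∫⁻ ω, ENNReal.ofReal
        (1 / sInf {t : ℝ | K ≤ (Finset.univ.filter fun i => X i ω ≤ t).card}) ∂μ ≥
      ENNReal.ofReal (((K : ℝ) ^ K)⁻¹ * Real.exp (-(K : ℝ)) *
        ((Real.exp (-1) / ((2 : ℝ) ^ (3 * K - 2) * Real.Gamma (3 * (K : ℝ) - 1)))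
            * N / K) ^ ((1 : ℝ) / (3 * (K : ℝ) - 2))) := by
  classical
  have hN : 1 ≤ N := le_trans hK hKN
  have hK0 : (0:ℝ) < K := by exact_mod_cast hK
  have hN0 : (0:ℝ) < N := by exact_mod_cast hN
  set a : ℝ := 3 * (K : ℝ) - 2 with ha_def
  have ha : 1 ≤ a := by
    have : (1:ℝ) ≤ K := by exact_mod_cast hK
    simp only [ha_def]; linarith
  have ha0 : 0 < a := by linarith
  set ν : Measure ℝ := gammaMeasure a (1/2) with hν_def
  have hν_prob : IsProbabilityMeasure ν := by
    rw [← hdist ⟨0, hN⟩]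
    exact Measure.isProbabilityMeasure_map (hmeas _).aemeasurable
  -- the constant
  set c2 : ℝ := Real.exp (-1) / ((2 : ℝ) ^ (3 * K - 2) * Real.Gamma (3 * (K : ℝ) - 1)) with hc2_def
  have hΓ1 : 0 < Real.Gamma (3 * (K : ℝ) - 1) := by
    apply Real.Gamma_pos_of_pos; linarith
  have h2pow : (0:ℝ) < (2 : ℝ) ^ (3 * K - 2) := by positivity
  have hc2 : 0 < c2 := by
    apply div_pos (Real.exp_pos _) (mul_pos h2pow hΓ1)
  set c : ℝ := c2 * N / K with hc_def
  have hc : 0 < c := by positivity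
  -- rewrite c2 in rpow form
  have h2cast : ((2:ℝ) ^ (3 * K - 2) : ℝ) = (2:ℝ) ^ a := by
    rw [← Real.rpow_natCast 2 (3 * K - 2)]
    congr 1
    have : 2 ≤ 3 * K := by omega
    push_cast [Nat.cast_sub this]
    ring
  have hΓeq : Real.Gamma (3 * (K : ℝ) - 1) = Real.Gamma (a + 1) := by
    congr 1; simp only [ha_def]; ring
  have hc2' : c2 = Real.exp (-1) * ((2:ℝ) ^ a)⁻¹ / Real.Gamma (a + 1) := by
    rw [hc2_def, h2cast, hΓeq, div_eq_mul_inv, mul_inv, div_eq_mul_inv]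
    ring
  -- choose t₀
  obtain ⟨t₀, ht₀, ht₀2, hct, hpt⟩ :
      ∃ t₀ : ℝ, 0 < t₀ ∧ t₀ ≤ 2 ∧ c ^ ((1:ℝ)/a) ≤ 1 / t₀ ∧
        ENNReal.ofReal ((K : ℝ) / N) ≤ ν (Set.Iic t₀) := by
    by_cases hA : c ^ (-(1/a)) ≤ 2
    · refine ⟨c ^ (-((1:ℝ)/a)), Real.rpow_pos_of_pos hc _, hA, ?_, ?_⟩
      · rw [Real.rpow_neg hc.le]
        simp
      · have hta : (c ^ (-((1:ℝ)/a))) ^ a = c⁻¹ := by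
          rw [← Real.rpow_mul hc.le]
          rw [show (-((1:ℝ)/a)) * a = -1 by field_simp]
          exact Real.rpow_neg_one c
        have := case_A a (c ^ (-((1:ℝ)/a))) ha (Real.rpow_pos_of_pos hc _) hA
        rw [hta] at this
        have heq : Real.exp (-1) * ((2:ℝ) ^ a)⁻¹ / Real.Gamma (a + 1) * c⁻¹ = (K:ℝ)/N := by
          rw [← hc2', hc_def]
          field_simp
        rwa [heq] at this
    · push_neg at hA
      refine ⟨2, by norm_num, le_refl 2, ?_, ?_⟩
      · have hy : 0 < c ^ ((1:ℝ)/a) := Real.rpow_pos_of_pos hc _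
        have : 2 < (c ^ ((1:ℝ)/a))⁻¹ := by
          rw [Real.rpow_neg hc.le] at hA; exact hA
        nlinarith [mul_lt_mul_of_pos_left this hy, mul_inv_cancel₀ (ne_of_gt hy)]
      · have := case_B a ha
        norm_num at hF
        refine le_trans ?_ this
        apply ENNReal.ofReal_le_ofReal
        exact hF
  -- block size
  set m : ℕ := N / K with hm_def
  have hm1 : 1 ≤ m := (Nat.one_le_div_iff (by omega)).2 hKN
  have hmK : m * K ≤ N := Nat.div_mul_le_self N K
  have hN2mK : N ≤ 2 * (m * K) := by
    have h1 : K * m + N % K = N := by rw [hm_def]; exact Nat.div_add_mod N K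
    have h2 : N % K < K := Nat.mod_lt _ (by omega)
    have h3 : K ≤ K * m := Nat.le_mul_of_pos_right K (by omega)
    calc N = K * m + N % K := h1.symm
      _ ≤ K * m + K := by omega
      _ ≤ K * m + K * m := by omega
      _ = 2 * (m * K) := by ring
  -- probabilities p and q
  set p := ν (Set.Iic t₀) with hp_def
  set q := ν (Set.Ioi t₀) with hq_def
  have hpq : p + q = 1 := by
    rw [hp_def, hq_def, ← Set.compl_Iic, measure_add_measure_compl measurableSet_Iic,
      measure_univ]
  have hp_top : p ≠ ⊤ := measure_ne_top ν _
  have hq_eq : q = 1 - p := ENNReal.eq_sub_of_add_eq hp_top (by rw [add_comm]; exact hpq)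
  have hcore := prob_core μ K N m hK hmK X hmeas hindep ν hdist t₀
  set W := ∑ u ∈ (Finset.univ : Finset (Fin m)).powerset.erase (∅ : Finset (Fin m)),
      p ^ u.card * q ^ (m - u.card) with hW_def
  have htot : (1:ℝ≥0∞) = ∑ u ∈ (Finset.univ : Finset (Fin m)).powerset,
      p ^ u.card * q ^ (m - u.card) := by
    have hh := Finset.prod_add (fun _ : Fin m => p) (fun _ : Fin m => q) Finset.univ
    simp only [Finset.prod_const] at hh
    rw [hpq, Finset.card_univ, Fintype.card_fin] at hh
    rw [one_pow] at hh
    rw [hh]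
    refine Finset.sum_congr rfl fun u hu => ?_
    congr 2
    rw [Finset.card_sdiff_of_subset (Finset.mem_powerset.1 hu), Finset.card_univ, Fintype.card_fin]
  have hsum1 : W + q ^ m = 1 := by
    have hempty : (∅ : Finset (Fin m)) ∈ (Finset.univ : Finset (Fin m)).powerset :=
      Finset.empty_mem_powerset _
    have hh := Finset.sum_erase_add (Finset.univ : Finset (Fin m)).powerset
      (fun u => p ^ u.card * q ^ (m - u.card)) hempty
    simp only [Finset.card_empty, pow_zero, one_mul, Nat.sub_zero] at hh
    rw [hW_def, hh, ← htot]
  -- bound q^m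
  have hKN' : (K:ℝ) ≤ N := by exact_mod_cast hKN
  have h1KN : (0:ℝ) ≤ 1 - (K:ℝ)/N := by
    have : (K:ℝ)/N ≤ 1 := by rw [div_le_one hN0]; exact hKN'
    linarith
  have hqle : q ≤ ENNReal.ofReal (1 - (K:ℝ)/N) := by
    rw [hq_eq]
    calc 1 - p ≤ 1 - ENNReal.ofReal ((K:ℝ)/N) := tsub_le_tsub_left hpt 1
      _ = ENNReal.ofReal (1 - (K:ℝ)/N) := by
          rw [ENNReal.ofReal_sub _ (by positivity), ENNReal.ofReal_one]
  have hqm : q ^ m ≤ ENNReal.ofReal (Real.exp (-(1/2 : ℝ))) := by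
    have hreal : (1 - (K:ℝ)/N) ^ m ≤ Real.exp (-(1/2 : ℝ)) := by
      have h2 : (1 - (K:ℝ)/N) ≤ Real.exp (-((K:ℝ)/N)) := by
        have := Real.add_one_le_exp (-((K:ℝ)/N)); linarith
      have hhalf : (1/2:ℝ) ≤ m * ((K:ℝ)/N) := by
        rw [mul_div_assoc']
        rw [le_div_iff₀ hN0]
        have hcast : (N:ℝ) ≤ 2 * ((m:ℝ) * K) := by exact_mod_cast hN2mK
        linarith
      calc (1 - (K:ℝ)/N)^m ≤ (Real.exp (-((K:ℝ)/N)))^m := pow_le_pow_left₀ h1KN h2 m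
        _ = Real.exp ((m:ℝ) * -((K:ℝ)/N)) := (Real.exp_nat_mul _ m).symm
        _ ≤ Real.exp (-(1/2:ℝ)) := by
            apply Real.exp_le_exp.2
            have : (m:ℝ) * -((K:ℝ)/N) = -((m:ℝ) * ((K:ℝ)/N)) := by ring
            rw [this]
            linarith
    calc q ^ m ≤ (ENNReal.ofReal (1 - (K:ℝ)/N)) ^ m := pow_le_pow_left' hqle m
      _ = ENNReal.ofReal ((1 - (K:ℝ)/N) ^ m) := (ENNReal.ofReal_pow h1KN m).symm
      _ ≤ ENNReal.ofReal (Real.exp (-(1/2 : ℝ))) := ENNReal.ofReal_le_ofReal hreal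
  have hexp_half_lt : Real.exp (-(1/2:ℝ)) ≤ 1 := by
    rw [← Real.exp_zero]
    exact Real.exp_le_exp.2 (by norm_num)
  have hW1 : ENNReal.ofReal (1 - Real.exp (-(1/2:ℝ))) ≤ W := by
    have hWeq : W = 1 - q ^ m := ENNReal.eq_sub_of_add_eq
      (ENNReal.pow_ne_top (measure_ne_top ν _)) hsum1
    rw [hWeq]
    calc ENNReal.ofReal (1 - Real.exp (-(1/2:ℝ)))
        = 1 - ENNReal.ofReal (Real.exp (-(1/2:ℝ))) := by
          rw [ENNReal.ofReal_sub _ (Real.exp_nonneg _), ENNReal.ofReal_one]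
      _ ≤ 1 - q ^ m := tsub_le_tsub_left hqm 1
  have hprob : ENNReal.ofReal ((1 - Real.exp (-(1/2:ℝ))) ^ K) ≤
      μ {ω | K ≤ (Finset.univ.filter fun i => X i ω ≤ t₀).card} := by
    refine le_trans ?_ hcore
    rw [ENNReal.ofReal_pow (by linarith) K]
    exact pow_le_pow_left' hW1 K
  -- positivity a.s.
  have hν0 : ν (Set.Iic 0) = 0 := by
    rw [hν_def, gammaMeasure, withDensity_apply _ measurableSet_Iic]
    rw [← Set.Iio_union_right, lintegral_union (measurableSet_singleton 0)
      (by simp [Set.disjoint_left]; exact fun x hx => ne_of_lt hx)]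
    rw [lintegral_gammaPDF_of_nonpos le_rfl]
    rw [Measure.restrict_eq_zero.2 Real.volume_singleton, lintegral_zero_measure, add_zero]
  set Pos : Set Ω := ⋂ i, X i ⁻¹' Set.Ioi 0 with hPos_def
  have hPosMeas : MeasurableSet Pos := MeasurableSet.iInter fun i => (hmeas i) measurableSet_Ioi
  have hPosC : μ Posᶜ = 0 := by
    rw [hPos_def, Set.compl_iInter]
    apply measure_iUnion_null
    intro i
    have hc1 : (X i ⁻¹' Set.Ioi 0)ᶜ = X i ⁻¹' Set.Iic 0 := by
      rw [← Set.preimage_compl]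
      congr 1
      simp
    rw [hc1, ← Measure.map_apply (hmeas i) measurableSet_Iic, hdist i]
    exact hν0
  -- the event A is measurable
  set A : Set Ω := {ω | K ≤ (Finset.univ.filter fun i => X i ω ≤ t₀).card} with hA_def
  have hAmeas : MeasurableSet A := by
    have hrep : A = ⋃ T ∈ (Finset.univ : Finset (Fin N)).powerset.filter
        (fun T : Finset (Fin N) => T.card = K), ⋂ i ∈ T, X i ⁻¹' Set.Iic t₀ := by
      ext ω
      simp only [hA_def, Set.mem_setOf_eq, Set.mem_iUnion, Finset.mem_filter,
        Finset.mem_powerset, Set.mem_iInter, Set.mem_preimage, Set.mem_Iic, exists_prop]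
      constructor
      · intro h
        obtain ⟨T, hTsub, hTcard⟩ := Finset.exists_subset_card_eq h
        refine ⟨T, ⟨Finset.subset_univ T, hTcard⟩, fun i hi => ?_⟩
        exact (Finset.mem_filter.1 (hTsub hi)).2
      · rintro ⟨T, ⟨-, hTcard⟩, hTle⟩
        calc K = T.card := hTcard.symm
          _ ≤ (Finset.univ.filter fun i => X i ω ≤ t₀).card := by
              apply Finset.card_le_card
              intro i hi
              exact Finset.mem_filter.2 ⟨Finset.mem_univ i, hTle i hi⟩
    rw [hrep]
    refine MeasurableSet.iUnion fun T => MeasurableSet.iUnion fun _ => ?_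
    exact MeasurableSet.iInter fun i => MeasurableSet.iInter fun _ =>
      (hmeas i) measurableSet_Iic
  -- pointwise bound on A ∩ Pos
  have hpoint : ∀ ω ∈ A ∩ Pos, ENNReal.ofReal (1/t₀) ≤ ENNReal.ofReal
      (1 / sInf {t : ℝ | K ≤ (Finset.univ.filter fun i => X i ω ≤ t).card}) := by
    intro ω hω
    obtain ⟨hωA, hωP⟩ := hω
    have hPosX : ∀ i, 0 < X i ω := by
      intro i
      have := Set.mem_iInter.1 hωP i
      exact this
    haveI : Nonempty (Fin N) := ⟨⟨0, hN⟩⟩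
    set Sω := {t : ℝ | K ≤ (Finset.univ.filter fun i => X i ω ≤ t).card} with hSω_def
    have ht₀mem : t₀ ∈ Sω := hωA
    have hne : ((Finset.univ : Finset (Fin N)).image fun i => X i ω).Nonempty :=
      Finset.univ_nonempty.image _
    set b := Finset.min' _ hne with hb_def
    have hbmem := Finset.min'_mem _ hne
    obtain ⟨i0, -, hi0⟩ := Finset.mem_image.1 hbmem
    have hbpos : 0 < b := by rw [hb_def, ← hi0]; exact hPosX i0
    have hlb : ∀ t ∈ Sω, b ≤ t := by
      intro t ht
      have hcard : 0 < (Finset.univ.filter fun i => X i ω ≤ t).card := lt_of_lt_of_le hK ht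
      obtain ⟨i, hi⟩ := Finset.card_pos.1 hcard
      exact le_trans (Finset.min'_le _ _ (Finset.mem_image_of_mem _ (Finset.mem_univ i)))
        (Finset.mem_filter.1 hi).2
    have hL1 : sInf Sω ≤ t₀ := csInf_le ⟨b, hlb⟩ ht₀mem
    have hL2 : b ≤ sInf Sω := le_csInf ⟨t₀, ht₀mem⟩ hlb
    exact ENNReal.ofReal_le_ofReal
      (one_div_le_one_div_of_le (lt_of_lt_of_le hbpos hL2) hL1)
  -- the real-number inequality
  have hexph : Real.exp (-(1/2:ℝ)) + Real.exp (-1:ℝ) ≤ 1 := by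
    set u := Real.exp (-(1/2:ℝ)) with hu
    have hu2 : u ^ 2 = Real.exp (-1:ℝ) := by
      rw [hu, ← Real.exp_nat_mul]
      norm_num
    have hupos : 0 < u := Real.exp_pos _
    have hlt : Real.exp (-1:ℝ) < 0.368 := by
      rw [Real.exp_neg]
      have h1 : (0:ℝ) < Real.exp 1 := Real.exp_pos 1
      rw [inv_lt_iff_one_lt_mul₀ h1]
      nlinarith [Real.exp_one_gt_d9]
    nlinarith [sq_nonneg (u - 0.607), hu2]
  have hone_sub : (0:ℝ) ≤ 1 - Real.exp (-(1/2:ℝ)) := by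
    have := Real.exp_pos (-1:ℝ); linarith
  have hreal : ((K:ℝ)^K)⁻¹ * Real.exp (-(K:ℝ)) * c ^ ((1:ℝ)/a)
      ≤ (1/t₀) * (1 - Real.exp (-(1/2:ℝ))) ^ K := by
    have hbase : ((K:ℝ)^K)⁻¹ * Real.exp (-(K:ℝ)) = ((K:ℝ)⁻¹ * Real.exp (-1:ℝ))^K := by
      rw [mul_pow, inv_pow, ← Real.exp_nat_mul]
      ring_nf
    rw [hbase]
    have hKinv : (K:ℝ)⁻¹ ≤ 1 := by
      rw [inv_le_one_iff₀]
      right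
      exact_mod_cast hK
    have hb2 : (K:ℝ)⁻¹ * Real.exp (-1:ℝ) ≤ 1 - Real.exp (-(1/2:ℝ)) := by
      have h3 : (K:ℝ)⁻¹ * Real.exp (-1:ℝ) ≤ Real.exp (-1:ℝ) := by
        nlinarith [Real.exp_pos (-1:ℝ)]
      linarith
    have hb3 : (0:ℝ) ≤ (K:ℝ)⁻¹ * Real.exp (-1) := by positivity
    have hpow := pow_le_pow_left₀ hb3 hb2 K
    have hcpos : 0 ≤ c ^ ((1:ℝ)/a) := (Real.rpow_pos_of_pos hc _).le
    calc ((K:ℝ)⁻¹ * Real.exp (-1:ℝ))^K * c ^ ((1:ℝ)/a)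
        ≤ (1 - Real.exp (-(1/2:ℝ)))^K * (1/t₀) :=
          mul_le_mul hpow hct hcpos (pow_nonneg hone_sub K)
      _ = (1/t₀) * (1 - Real.exp (-(1/2:ℝ)))^K := mul_comm _ _
  -- final chain
  refine ge_iff_le.2 ?_
  calc ENNReal.ofReal (((K : ℝ) ^ K)⁻¹ * Real.exp (-(K : ℝ)) * c ^ ((1:ℝ)/a))
      ≤ ENNReal.ofReal ((1/t₀) * (1 - Real.exp (-(1/2:ℝ))) ^ K) :=
        ENNReal.ofReal_le_ofReal hreal
    _ = ENNReal.ofReal (1/t₀) * ENNReal.ofReal ((1 - Real.exp (-(1/2:ℝ))) ^ K) :=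
        ENNReal.ofReal_mul (by positivity)
    _ ≤ ENNReal.ofReal (1/t₀) * μ A := mul_le_mul_right hprob _
    _ = ENNReal.ofReal (1/t₀) * μ (A ∩ Pos) := by rw [measure_inter_conull hPosC]
    _ = ∫⁻ _ω in A ∩ Pos, ENNReal.ofReal (1/t₀) ∂μ := by
        rw [setLIntegral_const]
    _ ≤ ∫⁻ ω in A ∩ Pos, ENNReal.ofReal
          (1 / sInf {t : ℝ | K ≤ (Finset.univ.filter fun i => X i ω ≤ t).card}) ∂μ := by
        apply lintegral_mono_ae
        exact (ae_restrict_iff' (hAmeas.inter hPosMeas)).2 (ae_of_all _ hpoint)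
    _ ≤ ∫⁻ ω, ENNReal.ofReal
          (1 / sInf {t : ℝ | K ≤ (Finset.univ.filter fun i => X i ω ≤ t).card}) ∂μ :=
        setLIntegral_le_lintegral _ _
end
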